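/- Let (Ω, F, 𝔽, P, B, X, α) be a weak solution of X_t = ∫_0^t α_s ds + B_t with α progressively measurable with respect to the augmented natural filtration of B, define E_k := {∫_0^{t_k} |α_t − μ(t, X_·)| dt = 0} for k ≤ −1 and E_∞ := lim_{k→−∞} E_k (the increasing limit). If P(E_∞) = 1, then there exist processes α̂ and X̂, progressively measurable with respect to the augmented natural filtration of B, such that α̂_t = μ(t, X̂_·) and X̂_t = ∫_0^t α̂_s ds + B_t for dt×dP-a.e. (t,ω); that is, Tsirelson's SDE then admits a strong solution. -/

import Mathlib

open MeasureTheory ProbabilityTheory Filter Set Matrix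
open scoped Classical

noncomputable section

/-- The σ-algebra generated by the `P`-null sets. -/
def nullSets {Ω : Type*} [MeasurableSpace Ω] (P : Measure Ω) : MeasurableSpace Ω :=
  MeasurableSpace.generateFrom {s : Set Ω | P s = 0}

/-- The natural filtration of a process `u`. -/
def natFilt {Ω E : Type*} [MeasurableSpace E] (u : ℝ → Ω → E) (s : ℝ) :
    MeasurableSpace Ω :=
  ⨆ r ∈ Set.Icc (0 : ℝ) s, MeasurableSpace.comap (u r) inferInstance

/-- The `P`-augmented natural filtration of a process `u`. -/
def augFilt {Ω E : Type*} [MeasurableSpace Ω] [MeasurableSpace E] (P : Measure Ω)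
    (u : ℝ → Ω → E) (s : ℝ) : MeasurableSpace Ω :=
  natFilt u s ⊔ nullSets P

/-- Progressive measurability of a process `u` with respect to a family of σ-algebras `F`. -/
def ProgMeas {Ω E : Type*} [MeasurableSpace E] (F : ℝ → MeasurableSpace Ω)
    (u : ℝ → Ω → E) : Prop :=
  ∀ s : ℝ, 0 ≤ s →
    @Measurable (Set.Icc (0 : ℝ) s × Ω) E
      (MeasurableSpace.prod inferInstance (F s)) _ (fun p => u p.1 p.2)

/-- Tsirelson's drift, relative to the time sequence `t : ℤ → ℝ`:
`μ(s, x) = fract ((x (t k) - x (t (k-1))) / (t k - t (k-1)))` for `s ∈ [t k, t (k+1))`,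
`k ≤ -1`, and `0` otherwise. -/
def tsirelsonDrift (t : ℤ → ℝ) (s : ℝ) (x : ℝ → ℝ) : ℝ :=
  if h : ∃ k : ℤ, k ≤ -1 ∧ t k ≤ s ∧ s < t (k + 1) then
    Int.fract ((x (t h.choose) - x (t (h.choose - 1))) / (t h.choose - t (h.choose - 1)))
  else 0

/-- The hypotheses on the time sequence: `t 0 = T`, strictly increasing, and
`t k ↓ 0` as `k → -∞`. -/
def TsirelsonTimes (T : ℝ) (t : ℤ → ℝ) : Prop :=
  t 0 = T ∧ (∀ k : ℤ, k ≤ 0 → t (k - 1) < t k) ∧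
    Tendsto (fun n : ℕ => t (-(n : ℤ))) atTop (nhds 0)

/-- `B` is a one-dimensional `F`-Brownian motion under `P`: continuous paths started at `0`,
adapted, with increments that are centered Gaussian and independent of the past. -/
def IsBM {Ω : Type*} [MeasurableSpace Ω] (P : Measure Ω) (F : ℝ → MeasurableSpace Ω)
    (B : ℝ → Ω → ℝ) : Prop :=
  (∀ ω, B 0 ω = 0) ∧ (∀ ω, Continuous fun s => B s ω) ∧
  (∀ s : ℝ, 0 ≤ s → Measurable[F s] (B s)) ∧
  (∀ s u : ℝ, 0 ≤ s → s < u →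
    Measure.map (fun ω => B u ω - B s ω) P = gaussianReal 0 ((u - s).toNNReal) ∧
    Indep (MeasurableSpace.comap (fun ω => B u ω - B s ω) inferInstance) (F s) P)

namespace Tsir

variable {T : ℝ} {t : ℤ → ℝ}

lemma tt_mono (ht : TsirelsonTimes T t) : ∀ n : ℕ, ∀ k : ℤ, k ≤ 0 → t (k - n) ≤ t k := by
  intro n
  induction n with
  | zero => intro k hk; simp
  | succ n ih =>
    intro k hk
    have h1 : t (k - n - 1) < t (k - n) := ht.2.1 (k - n) (by omega)
    have h2 : (k - (n+1 : ℕ) : ℤ) = k - n - 1 := by push_cast; ring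
    rw [h2]
    exact le_trans h1.le (ih k hk)

lemma mono (ht : TsirelsonTimes T t) {j k : ℤ} (hjk : j ≤ k) (hk : k ≤ 0) : t j ≤ t k := by
  have h : j = k - ((k - j).toNat : ℤ) := by omega
  rw [h]; exact tt_mono ht _ k hk

lemma strict_mono (ht : TsirelsonTimes T t) {j k : ℤ} (hjk : j < k) (hk : k ≤ 0) : t j < t k :=
  lt_of_le_of_lt (mono ht (j := j) (k := k - 1) (by omega) (by omega)) (ht.2.1 k hk)

lemma nonneg (ht : TsirelsonTimes T t) {k : ℤ} (hk : k ≤ 0) : 0 ≤ t k := by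
  have h : ∀ n : ℕ, 0 ≤ t (-(n:ℤ)) := by
    intro n
    refine le_of_tendsto ht.2.2 ?_
    refine eventually_atTop.2 ⟨n, fun m hm => ?_⟩
    exact mono ht (j := -(m:ℤ)) (k := -(n:ℤ)) (by omega) (by omega)
  have : k = -(((-k).toNat : ℕ) : ℤ) := by omega
  rw [this]; exact h _

lemma pos (ht : TsirelsonTimes T t) {k : ℤ} (hk : k ≤ 0) : 0 < t k :=
  lt_of_le_of_lt (nonneg ht (by omega : k - 1 ≤ 0)) (ht.2.1 k hk)

lemma le_T (ht : TsirelsonTimes T t) {k : ℤ} (hk : k ≤ 0) : t k ≤ T := by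
  rw [← ht.1]; exact mono ht hk le_rfl

lemma interval_unique (ht : TsirelsonTimes T t) {j j' : ℤ} {s : ℝ}
    (hj : j ≤ -1) (h1 : t j ≤ s) (h2 : s < t (j+1))
    (hj' : j' ≤ -1) (h1' : t j' ≤ s) (h2' : s < t (j'+1)) : j = j' := by
  by_contra hne
  rcases lt_or_gt_of_ne hne with h | h
  · exact absurd (le_trans (mono ht (by omega : j + 1 ≤ j') (by omega)) h1') (not_le.2 h2)
  · exact absurd (le_trans (mono ht (by omega : j' + 1 ≤ j) (by omega)) h1) (not_le.2 h2')

lemma exists_interval (ht : TsirelsonTimes T t) {s : ℝ} (hs0 : 0 < s) (hsT : s < T) :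
    ∃ j : ℤ, j ≤ -1 ∧ t j ≤ s ∧ s < t (j + 1) := by
  have hev : ∀ᶠ n : ℕ in atTop, t (-(n:ℤ)) < s := ht.2.2.eventually_lt_const hs0
  obtain ⟨n₀, hn₀⟩ := hev.exists
  have hex : ∃ n : ℕ, t (-(n:ℤ)) ≤ s := ⟨n₀, hn₀.le⟩
  have hN : t (-(Nat.find hex : ℤ)) ≤ s := Nat.find_spec hex
  have hN0 : Nat.find hex ≠ 0 := by
    intro h
    rw [h] at hN
    simp only [Nat.cast_zero, neg_zero] at hN
    rw [ht.1] at hN; linarith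
  refine ⟨-(Nat.find hex : ℤ), by omega, hN, ?_⟩
  have hmin := Nat.find_min hex (m := Nat.find hex - 1) (by omega)
  have hc : (-(Nat.find hex : ℤ) + 1) = -((Nat.find hex - 1 : ℕ) : ℤ) := by
    have : ((Nat.find hex - 1 : ℕ) : ℤ) = (Nat.find hex : ℤ) - 1 := by
      exact_mod_cast Int.ofNat_sub (by omega)
    omega
  rw [hc]
  exact lt_of_not_ge hmin

lemma not_exists_ge (ht : TsirelsonTimes T t) {s : ℝ} (hs : T ≤ s) :
    ¬ ∃ j : ℤ, j ≤ -1 ∧ t j ≤ s ∧ s < t (j + 1) := by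
  rintro ⟨j, hj, -, h2⟩
  have : t (j+1) ≤ T := le_T ht (by omega)
  linarith

/-- index function: the unique `j ≤ -1` with `s ∈ [t j, t (j+1))`, sentinel `1` otherwise. -/
def ffIdx (t : ℤ → ℝ) (s : ℝ) : ℤ :=
  if h : ∃ j : ℤ, j ≤ -1 ∧ t j ≤ s ∧ s < t (j + 1) then h.choose else 1

lemma ffIdx_eq (ht : TsirelsonTimes T t) {j : ℤ} {s : ℝ}
    (hj : j ≤ -1) (h1 : t j ≤ s) (h2 : s < t (j+1)) : ffIdx t s = j := by
  have h : ∃ j : ℤ, j ≤ -1 ∧ t j ≤ s ∧ s < t (j + 1) := ⟨j, hj, h1, h2⟩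
  rw [ffIdx, dif_pos h]
  exact interval_unique ht h.choose_spec.1 h.choose_spec.2.1 h.choose_spec.2.2 hj h1 h2

lemma ffIdx_le_or (t : ℤ → ℝ) (s : ℝ) :
    (∃ h : (∃ j : ℤ, j ≤ -1 ∧ t j ≤ s ∧ s < t (j + 1)), ffIdx t s = h.choose ∧ ffIdx t s ≤ -1)
    ∨ ((¬ ∃ j : ℤ, j ≤ -1 ∧ t j ≤ s ∧ s < t (j + 1)) ∧ ffIdx t s = 1) := by
  by_cases h : ∃ j : ℤ, j ≤ -1 ∧ t j ≤ s ∧ s < t (j + 1)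
  · exact Or.inl ⟨h, dif_pos h, by rw [ffIdx, dif_pos h]; exact h.choose_spec.1⟩
  · exact Or.inr ⟨h, dif_neg h⟩

lemma ffIdx_spec (ht : TsirelsonTimes T t) {s : ℝ}
    (h : ∃ j : ℤ, j ≤ -1 ∧ t j ≤ s ∧ s < t (j + 1)) :
    ffIdx t s ≤ -1 ∧ t (ffIdx t s) ≤ s ∧ s < t (ffIdx t s + 1) := by
  rw [ffIdx, dif_pos h]; exact h.choose_spec

lemma ffIdx_fiber (ht : TsirelsonTimes T t) {j : ℤ} (hj : j ≤ -1) :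
    {s : ℝ | ffIdx t s = j} = Ico (t j) (t (j+1)) := by
  ext s
  simp only [mem_setOf_eq, mem_Ico]
  constructor
  · intro h
    rcases ffIdx_le_or t s with ⟨hex, -, -⟩ | ⟨-, h1⟩
    · have := ffIdx_spec ht hex
      rw [h] at this
      exact ⟨this.2.1, this.2.2⟩
    · omega
  · rintro ⟨h1, h2⟩
    exact ffIdx_eq ht hj h1 h2

lemma ffIdx_measurable (ht : TsirelsonTimes T t) : Measurable (ffIdx t) := by
  apply measurable_to_countable'
  intro j
  by_cases hj : j ≤ -1
  · rw [show (ffIdx t ⁻¹' {j}) = {s : ℝ | ffIdx t s = j} from rfl, ffIdx_fiber ht hj]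
    exact measurableSet_Ico
  · by_cases hj1 : j = 1
    · subst hj1
      have : (ffIdx t ⁻¹' {1}) = (⋃ i : ℤ, {s : ℝ | i ≤ -1 ∧ t i ≤ s ∧ s < t (i+1)})ᶜ := by
        ext s
        simp only [mem_preimage, mem_singleton_iff, mem_compl_iff, mem_iUnion, mem_setOf_eq,
          not_exists]
        constructor
        · intro h i hi
          rcases ffIdx_le_or t s with ⟨hex, -, hle⟩ | ⟨hne, -⟩
          · omega
          · exact hne ⟨i, hi⟩
        · intro h
          rcases ffIdx_le_or t s with ⟨hex, -, hle⟩ | ⟨-, h1⟩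
          · obtain ⟨i, hi⟩ := hex
            exact absurd hi (h i)
          · exact h1
      rw [this]
      refine (MeasurableSet.iUnion fun i => ?_).compl
      by_cases hi : i ≤ -1
      · simp only [hi, true_and]
        exact measurableSet_Ico (a := t i) (b := t (i+1))
      · simp only [hi, false_and, setOf_false]
        exact MeasurableSet.empty
    · have : (ffIdx t ⁻¹' {j}) = ∅ := by
        ext s
        simp only [mem_preimage, mem_singleton_iff, mem_empty_iff_false, iff_false]
        rcases ffIdx_le_or t s with ⟨-, -, hle⟩ | ⟨-, h1⟩ <;> omega
      rw [this]; exact MeasurableSet.empty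

lemma drift_eq_ff (ht : TsirelsonTimes T t) (s : ℝ) (x : ℝ → ℝ) :
    tsirelsonDrift t s x =
      if ffIdx t s ≤ -1 then
        Int.fract ((x (t (ffIdx t s)) - x (t (ffIdx t s - 1))) / (t (ffIdx t s) - t (ffIdx t s - 1)))
      else 0 := by
  rw [tsirelsonDrift, ffIdx]
  by_cases h : ∃ j : ℤ, j ≤ -1 ∧ t j ≤ s ∧ s < t (j + 1)
  · rw [dif_pos h, dif_pos h, if_pos h.choose_spec.1]
  · rw [dif_neg h, dif_neg h, if_neg (by omega)]

lemma drift_eval (ht : TsirelsonTimes T t) {j : ℤ} {s : ℝ} (x : ℝ → ℝ)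
    (hj : j ≤ -1) (h1 : t j ≤ s) (h2 : s < t (j+1)) :
    tsirelsonDrift t s x = Int.fract ((x (t j) - x (t (j-1))) / (t j - t (j-1))) := by
  rw [drift_eq_ff ht, ffIdx_eq ht hj h1 h2, if_pos hj]

lemma drift_eval_none {s : ℝ} (x : ℝ → ℝ)
    (h : ¬ ∃ j : ℤ, j ≤ -1 ∧ t j ≤ s ∧ s < t (j + 1)) :
    tsirelsonDrift t s x = 0 := dif_neg h

end Tsir


namespace Tsir

variable {Ω : Type*} {T : ℝ} {t : ℤ → ℝ}

/-- Grid values of the recursively-defined candidate strong solution started from the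
open-loop solution at level `k`: `gridVal t α B k n = X^k (t (k + n - 1))`. -/
def gridVal (t : ℤ → ℝ) (α B : ℝ → Ω → ℝ) (k : ℤ) : ℕ → Ω → ℝ
  | 0 => fun ω => (∫ r in Set.Icc (0:ℝ) (t (k-1)), α r ω) + B (t (k-1)) ω
  | 1 => fun ω => (∫ r in Set.Icc (0:ℝ) (t k), α r ω) + B (t k) ω
  | (n+2) => fun ω =>
      gridVal t α B k (n+1) ω
      + Int.fract ((gridVal t α B k (n+1) ω - gridVal t α B k n ω) / (t (k+n) - t (k+n-1)))
          * (t (k+n+1) - t (k+n))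
      + (B (t (k+n+1)) ω - B (t (k+n)) ω)

/-- piecewise value of `driftApprox` on the interval indexed by `j`. -/
def ggA (t : ℤ → ℝ) (α B : ℝ → Ω → ℝ) (k j : ℤ) (ω : Ω) : ℝ :=
  if j ≤ -1 then
    Int.fract ((gridVal t α B k (j - k + 1).toNat ω - gridVal t α B k (j - k).toNat ω)
      / (t j - t (j - 1)))
  else 0

/-- the `k`-th approximation: `α` before time `t k`, Tsirelson recursion afterwards. -/
def driftApprox (t : ℤ → ℝ) (α B : ℝ → Ω → ℝ) (k : ℤ) (s : ℝ) (ω : Ω) : ℝ :=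
  if s < t k then α s ω else ggA t α B k (ffIdx t s) ω

/-- the candidate strong-solution drift. -/
def alphaHat (t : ℤ → ℝ) (α B : ℝ → Ω → ℝ) (s : ℝ) (ω : Ω) : ℝ :=
  (⨅ n : ℕ, ⨆ m : ℕ,
    ENNReal.ofReal (driftApprox t α B (-(n:ℤ) - (m:ℤ) - 1) s ω)).toReal

/-- the candidate strong solution. -/
def xHat (t : ℤ → ℝ) (α B : ℝ → Ω → ℝ) (s : ℝ) (ω : Ω) : ℝ :=
  (∫ r in Set.Icc (0:ℝ) s, alphaHat t α B r ω) + B s ω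

variable {α B : ℝ → Ω → ℝ}

lemma driftApprox_lt {k : ℤ} {s : ℝ} {ω : Ω} (h : s < t k) :
    driftApprox t α B k s ω = α s ω := if_pos h

lemma driftApprox_interval (ht : TsirelsonTimes T t) {k j : ℤ} {s : ℝ} {ω : Ω}
    (h : ¬ s < t k) (hj : j ≤ -1) (h1 : t j ≤ s) (h2 : s < t (j+1)) :
    driftApprox t α B k s ω =
      Int.fract ((gridVal t α B k (j - k + 1).toNat ω - gridVal t α B k (j - k).toNat ω)
        / (t j - t (j - 1))) := by
  rw [driftApprox, if_neg h, ffIdx_eq ht hj h1 h2, ggA, if_pos hj]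

lemma driftApprox_none {k : ℤ} {s : ℝ} {ω : Ω}
    (h : ¬ s < t k) (hne : ¬ ∃ j : ℤ, j ≤ -1 ∧ t j ≤ s ∧ s < t (j + 1)) :
    driftApprox t α B k s ω = 0 := by
  rw [driftApprox, if_neg h, ffIdx, dif_neg hne, ggA, if_neg (by omega)]

lemma driftApprox_mem (hα : ∀ s ω, α s ω ∈ Set.Icc (0:ℝ) 1) (k : ℤ) (s : ℝ) (ω : Ω) :
    driftApprox t α B k s ω ∈ Set.Icc (0:ℝ) 1 := by
  rw [driftApprox]
  split_ifs with h
  · exact hα s ω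
  · rw [ggA]
    split_ifs with h1
    · exact ⟨Int.fract_nonneg _, (Int.fract_lt_one _).le⟩
    · exact ⟨le_rfl, zero_le_one⟩

lemma alphaHat_eval {s : ℝ} {ω : Ω} {k₀ : ℤ} (hk₀ : k₀ ≤ -1)
    (hstab : ∀ k : ℤ, k ≤ k₀ → driftApprox t α B k s ω = driftApprox t α B k₀ s ω)
    (h0 : 0 ≤ driftApprox t α B k₀ s ω) :
    alphaHat t α B s ω = driftApprox t α B k₀ s ω := by
  set c := driftApprox t α B k₀ s ω with hc
  set N : ℕ := (-k₀ - 1).toNat with hN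
  have hNval : (N : ℤ) = -k₀ - 1 := Int.toNat_of_nonneg (by omega)
  have hkey : ∀ n m : ℕ, (N ≤ n ∨ N ≤ m) →
      driftApprox t α B (-(n:ℤ) - (m:ℤ) - 1) s ω = c := by
    intro n m hnm
    apply hstab
    rcases hnm with h | h
    · have : (N:ℤ) ≤ n := by exact_mod_cast h
      omega
    · have : (N:ℤ) ≤ m := by exact_mod_cast h
      omega
  have heq : (⨅ n : ℕ, ⨆ m : ℕ,
      ENNReal.ofReal (driftApprox t α B (-(n:ℤ) - (m:ℤ) - 1) s ω)) = ENNReal.ofReal c := by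
    apply le_antisymm
    · refine iInf_le_of_le N (le_of_eq ?_)
      rw [show (⨆ m : ℕ, ENNReal.ofReal (driftApprox t α B (-(N:ℤ) - (m:ℤ) - 1) s ω))
          = ⨆ _ : ℕ, ENNReal.ofReal c from iSup_congr fun m => by rw [hkey N m (Or.inl le_rfl)]]
      exact iSup_const
    · refine le_iInf fun n => le_iSup_of_le N (le_of_eq ?_)
      rw [hkey n N (Or.inr le_rfl)]
  rw [alphaHat, heq, ENNReal.toReal_ofReal h0]

end Tsir

namespace Tsir

variable {Ω : Type*}

lemma prod_mono {γ : Type*} (mγ : MeasurableSpace γ) {m m' : MeasurableSpace Ω} (h : m ≤ m') :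
    (MeasurableSpace.prod mγ m : MeasurableSpace (γ × Ω)) ≤ MeasurableSpace.prod mγ m' :=
  sup_le_sup le_rfl (MeasurableSpace.comap_mono h)

lemma meas_pw {γ : Type*} [MeasurableSpace γ] (M : MeasurableSpace Ω)
    (f : γ → ℤ) (g : ℤ → Ω → ℝ)
    (hf : ∀ j, MeasurableSet {x : γ | f x = j})
    (hg : ∀ j : ℤ, {x : γ | f x = j} = ∅ ∨ @Measurable Ω ℝ M _ (g j)) :
    @Measurable (γ × Ω) ℝ (MeasurableSpace.prod inferInstance M) _
      (fun p => g (f p.1) p.2) := by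
  letI := M
  intro A hA
  have hset : (fun p : γ × Ω => g (f p.1) p.2) ⁻¹' A
      = ⋃ j : ℤ, ({x : γ | f x = j} ×ˢ (g j ⁻¹' A)) := by
    ext p
    simp only [Set.mem_preimage, Set.mem_iUnion, Set.mem_prod, Set.mem_setOf_eq]
    constructor
    · intro h; exact ⟨f p.1, rfl, h⟩
    · rintro ⟨j, hj, hx⟩; rw [hj]; exact hx
  rw [hset]
  refine MeasurableSet.iUnion fun j => ?_
  rcases hg j with hemp | hmeas
  · rw [hemp, Set.empty_prod]
    exact MeasurableSet.empty
  · exact (hf j).prod (hmeas hA)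

def glob (c : ℝ) (u : ℝ → Ω → ℝ) : ℝ × Ω → ℝ := fun q =>
  if q.1 ∈ Set.Icc (0:ℝ) c then u q.1 q.2 else 0

lemma glob_spec {c : ℝ} {u : ℝ → Ω → ℝ} {r : ℝ} {ω : Ω} (h : r ∈ Set.Icc (0:ℝ) c) :
    glob c u (r, ω) = u r ω := if_pos h

lemma glob_meas (M : MeasurableSpace Ω) {c : ℝ} (hc : 0 ≤ c) {u : ℝ → Ω → ℝ}
    (hu : @Measurable (Set.Icc (0:ℝ) c × Ω) ℝ (MeasurableSpace.prod inferInstance M) _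
      (fun p => u p.1 p.2)) :
    @Measurable (ℝ × Ω) ℝ (MeasurableSpace.prod inferInstance M) _ (glob c u) := by
  letI := M
  have hW : Measurable fun q : ℝ × Ω => u (Set.projIcc (0:ℝ) c hc q.1) q.2 := by
    have hm : Measurable fun q : ℝ × Ω => (Set.projIcc (0:ℝ) c hc q.1, q.2) := by
      refine Measurable.prodMk ?_ measurable_snd
      exact (continuous_projIcc.measurable).comp measurable_fst
    exact hu.comp hm
  have heq : glob c u = fun q : ℝ × Ω =>
      if q.1 ∈ Set.Icc (0:ℝ) c then u (Set.projIcc (0:ℝ) c hc q.1) q.2 else 0 := by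
    funext q
    by_cases h : q.1 ∈ Set.Icc (0:ℝ) c <;> simp [glob, h, Set.projIcc_of_mem]
  rw [heq]
  exact Measurable.ite (measurable_fst measurableSet_Icc) hW measurable_const

lemma sect_aemeas (M : MeasurableSpace Ω) {c : ℝ} {u : ℝ → Ω → ℝ}
    (hu : @Measurable (Set.Icc (0:ℝ) c × Ω) ℝ (MeasurableSpace.prod inferInstance M) _
      (fun p => u p.1 p.2)) (ω : Ω) :
    AEMeasurable (fun r => u r ω) (volume.restrict (Set.Icc (0:ℝ) c)) := by
  rcases le_or_gt 0 c with hc | hc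
  · letI := M
    have h1 : Measurable fun r : ℝ => glob c u (r, ω) :=
      (glob_meas M hc hu).comp (measurable_id.prodMk measurable_const)
    refine (Measurable.aemeasurable h1).congr ?_
    filter_upwards [ae_restrict_mem measurableSet_Icc] with r hr
    exact glob_spec hr
  · rw [Set.Icc_eq_empty (by linarith : ¬ (0:ℝ) ≤ c), Measure.restrict_empty]
    exact aemeasurable_zero_measure

lemma finite_restrict {c : ℝ} {S : Set ℝ} (hS : S ⊆ Set.Icc (0:ℝ) c) :
    IsFiniteMeasure (volume.restrict S) := by
  constructor
  rw [Measure.restrict_apply_univ]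
  exact lt_of_le_of_lt (measure_mono hS) measure_Icc_lt_top

lemma sect_integrableOn (M : MeasurableSpace Ω) {c : ℝ} {u : ℝ → Ω → ℝ}
    (hu : @Measurable (Set.Icc (0:ℝ) c × Ω) ℝ (MeasurableSpace.prod inferInstance M) _
      (fun p => u p.1 p.2))
    (hmem : ∀ s ω, u s ω ∈ Set.Icc (0:ℝ) 1) (ω : Ω)
    {S : Set ℝ} (hS : S ⊆ Set.Icc (0:ℝ) c) (hSm : MeasurableSet S) :
    IntegrableOn (fun r => u r ω) S volume := by
  haveI := finite_restrict hS
  have ham : AEMeasurable (fun r => u r ω) (volume.restrict S) :=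
    (sect_aemeas M hu ω).mono_measure (Measure.restrict_mono hS le_rfl)
  refine Integrable.mono' (integrable_const 1) ham.aestronglyMeasurable ?_
  refine Filter.Eventually.of_forall fun r => ?_
  rw [Real.norm_eq_abs, abs_le]
  exact ⟨by linarith [(hmem r ω).1], (hmem r ω).2⟩

lemma meas_integral (M : MeasurableSpace Ω) {c : ℝ} {u : ℝ → Ω → ℝ}
    (hu : @Measurable (Set.Icc (0:ℝ) c × Ω) ℝ (MeasurableSpace.prod inferInstance M) _
      (fun p => u p.1 p.2)) :
    @Measurable Ω ℝ M _ (fun ω => ∫ r in Set.Icc (0:ℝ) c, u r ω) := by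
  letI := M
  rcases le_or_gt 0 c with hc | hc
  · have key : (fun ω => ∫ r in Set.Icc (0:ℝ) c, u r ω)
        = fun ω => ∫ r in Set.Icc (0:ℝ) c, glob c u (r, ω) := by
      funext ω
      refine setIntegral_congr_ae measurableSet_Icc ?_
      exact Filter.Eventually.of_forall fun x hx => (glob_spec hx).symm
    rw [key]
    exact ((glob_meas M hc hu).stronglyMeasurable.integral_prod_left').measurable
  · have : Set.Icc (0:ℝ) c = ∅ := Set.Icc_eq_empty (by linarith)
    simp only [this, Measure.restrict_empty, integral_zero_measure]
    exact measurable_const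

end Tsir

namespace Tsir

variable {Ω : Type*} {T : ℝ} {t : ℤ → ℝ} {α B : ℝ → Ω → ℝ}

lemma prog_B (M : ℝ → MeasurableSpace Ω) {B : ℝ → Ω → ℝ}
    (hmono : ∀ a b : ℝ, a ≤ b → M a ≤ M b)
    (hBcont : ∀ ω, Continuous fun s => B s ω)
    (hBad : ∀ r : ℝ, 0 ≤ r → @Measurable Ω ℝ (M r) _ (B r)) :
    ProgMeas M B := by
  intro s hs
  letI := M s
  rcases eq_or_lt_of_le hs with hs0 | hs0
  · have heq : (fun p : Set.Icc (0:ℝ) s × Ω => B p.1 p.2) = fun p => B 0 p.2 := by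
      funext p
      have hx : (p.1 : ℝ) = 0 := le_antisymm (hs0 ▸ p.1.2.2) p.1.2.1
      rw [hx]
    rw [heq]
    exact ((hBad 0 le_rfl).mono (hmono 0 s hs) le_rfl).comp measurable_snd
  · set G : ℕ → ℤ → Ω → ℝ := fun n j ω =>
      if 0 ≤ j ∧ j ≤ 2^n then B ((j : ℝ) * s / 2^n) ω else 0 with hG
    set F : ℕ → Set.Icc (0:ℝ) s → ℤ := fun n x => ⌈(x:ℝ) * 2^n / s⌉ with hF
    have hmeas : ∀ n, Measurable fun p : Set.Icc (0:ℝ) s × Ω => G n (F n p.1) p.2 := by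
      intro n
      refine meas_pw (M s) (F n) (G n) ?_ ?_
      · intro j
        have hfib : {x : Set.Icc (0:ℝ) s | F n x = j}
            = (fun x : Set.Icc (0:ℝ) s => (x:ℝ) * 2^n / s) ⁻¹' (Set.Ioc ((j:ℝ)-1) j) := by
          ext x
          simp only [Set.mem_setOf_eq, Set.mem_preimage, Set.mem_Ioc, hF]
          exact Int.ceil_eq_iff
        rw [hfib]
        exact ((measurable_subtype_coe.mul_const _).div_const _) measurableSet_Ioc
      · intro j
        refine Or.inr ?_
        by_cases hj : 0 ≤ j ∧ j ≤ 2^n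
        · have h2 : (0:ℝ) < 2^n := by positivity
          have h0 : (0:ℝ) ≤ (j:ℝ) * s / 2^n := by
            have : (0:ℝ) ≤ (j:ℝ) := by exact_mod_cast hj.1
            positivity
          have h1 : (j:ℝ) * s / 2^n ≤ s := by
            rw [div_le_iff₀ h2]
            have hj2 : (j:ℝ) ≤ 2^n := by exact_mod_cast hj.2
            nlinarith [hs0.le]
          have : G n j = B ((j : ℝ) * s / 2^n) := by funext ω; simp [hG, hj]
          rw [this]
          exact (hBad _ h0).mono (hmono _ s h1) le_rfl
        · have : G n j = fun _ => 0 := by funext ω; simp [hG, hj]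
          rw [this]; exact measurable_const
    refine measurable_of_tendsto_metrizable hmeas ?_
    rw [tendsto_pi_nhds]
    intro p
    have hr0 : (0:ℝ) ≤ (p.1:ℝ) := p.1.2.1
    have hrs : (p.1:ℝ) ≤ s := p.1.2.2
    have hFin : ∀ n, 0 ≤ F n p.1 ∧ F n p.1 ≤ 2^n := by
      intro n
      have h2 : (0:ℝ) < 2^n := by positivity
      constructor
      · exact Int.ceil_nonneg (by positivity)
      · refine Int.ceil_le.2 ?_
        push_cast
        rw [div_le_iff₀ hs0]
        nlinarith
    have hval : ∀ n, G n (F n p.1) p.2 = B ((F n p.1 : ℝ) * s / 2^n) p.2 := by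
      intro n; simp [hG, hFin n]
    have hτ : Tendsto (fun n => ((F n p.1 : ℝ) * s / 2^n)) atTop (nhds (p.1:ℝ)) := by
      rw [tendsto_iff_dist_tendsto_zero]
      have hb : Tendsto (fun n : ℕ => s * (1/2:ℝ)^n) atTop (nhds 0) := by
        have := (tendsto_pow_atTop_nhds_zero_of_lt_one (by norm_num : (0:ℝ) ≤ 1/2)
          (by norm_num : (1/2:ℝ) < 1)).const_mul s
        simpa using this
      refine squeeze_zero (fun n => dist_nonneg) (fun n => ?_) hb
      have h2 : (0:ℝ) < 2^n := by positivity
      have hc1 : ((p.1:ℝ) * 2^n / s) ≤ (F n p.1 : ℝ) := Int.le_ceil _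
      have hc2 : (F n p.1 : ℝ) < (p.1:ℝ) * 2^n / s + 1 := Int.ceil_lt_add_one _
      have hm1 : (p.1:ℝ) * 2^n ≤ (F n p.1 : ℝ) * s := by
        have := mul_le_mul_of_nonneg_right hc1 hs0.le
        rwa [div_mul_cancel₀ _ (ne_of_gt hs0)] at this
      have hm2 : (F n p.1 : ℝ) * s < (p.1:ℝ) * 2^n + s := by
        have := mul_lt_mul_of_pos_right hc2 hs0
        rwa [add_mul, one_mul, div_mul_cancel₀ _ (ne_of_gt hs0)] at this
      rw [Real.dist_eq, abs_le]
      have hpow : (1/2:ℝ)^n = 1/2^n := by rw [div_pow, one_pow]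
      constructor
      · have : (p.1:ℝ) ≤ (F n p.1 : ℝ) * s / 2^n := by
          rw [le_div_iff₀ h2]; exact hm1
        have hsp : 0 ≤ s * (1/2:ℝ)^n := by positivity
        linarith
      · rw [hpow]
        have : (F n p.1 : ℝ) * s / 2^n ≤ (p.1:ℝ) + s / 2^n := by
          rw [div_le_iff₀ h2, add_mul, div_mul_cancel₀ _ (ne_of_gt h2)]
          linarith
        rw [mul_one_div]
        linarith
    have := ((hBcont p.2).tendsto _).comp hτ
    exact Tendsto.congr (fun n => (hval n).symm) this

lemma gridVal_meas (ht : TsirelsonTimes T t) (M : ℝ → MeasurableSpace Ω)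
    (hmono : ∀ a b : ℝ, a ≤ b → M a ≤ M b)
    (hα : ProgMeas M α)
    (hBad : ∀ r : ℝ, 0 ≤ r → @Measurable Ω ℝ (M r) _ (B r)) :
    ∀ n : ℕ, ∀ k : ℤ, k + n - 1 ≤ 0 →
      @Measurable Ω ℝ (M (t (k + n - 1))) _ (gridVal t α B k n) := by
  have base : ∀ c : ℝ, 0 ≤ c → @Measurable Ω ℝ (M c) _
      (fun ω => (∫ r in Set.Icc (0:ℝ) c, α r ω) + B c ω) := by
    intro c hc
    letI := M c
    exact (meas_integral (M c) (hα c hc)).add (hBad c hc)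
  have key : ∀ n : ℕ, (∀ k : ℤ, k + n - 1 ≤ 0 →
        @Measurable Ω ℝ (M (t (k + n - 1))) _ (gridVal t α B k n))
      ∧ (∀ k : ℤ, k + (n+1) - 1 ≤ 0 →
        @Measurable Ω ℝ (M (t (k + (n+1) - 1))) _ (gridVal t α B k (n+1))) := by
    intro n
    induction n with
    | zero =>
      constructor
      · intro k hk
        have e : k + ((0:ℕ):ℤ) - 1 = k - 1 := by simp
        rw [e]
        exact base (t (k-1)) (nonneg ht (by omega))
      · intro k hk
        have e : k + (((0:ℕ):ℤ) + 1) - 1 = k := by simp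
        rw [e]
        exact base (t k) (nonneg ht (by push_cast at hk; omega))
    | succ n ihn =>
      refine ⟨ihn.2, ?_⟩
      intro k hk
      have hk' : k + n + 1 ≤ 0 := by push_cast at hk; omega
      have e : k + (((n+1:ℕ):ℤ) + 1) - 1 = k + n + 1 := by push_cast; ring
      rw [e]
      letI := M (t (k + n + 1))
      have h1 : @Measurable Ω ℝ (M (t (k + n))) _ (gridVal t α B k (n+1)) := by
        have := ihn.2 k (by push_cast; omega)
        have e1 : k + (((n:ℕ):ℤ) + 1) - 1 = k + n := by push_cast; ring
        rwa [e1] at this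
      have h0 : @Measurable Ω ℝ (M (t (k + n - 1))) _ (gridVal t α B k n) := by
        have := ihn.1 k (by omega)
        have e0 : k + ((n:ℕ):ℤ) - 1 = k + n - 1 := by push_cast; ring
        rwa [e0] at this
      have h1' : Measurable (gridVal t α B k (n+1)) :=
        h1.mono (hmono _ _ (mono ht (by omega) (by omega))) le_rfl
      have h0' : Measurable (gridVal t α B k n) :=
        h0.mono (hmono _ _ (mono ht (by omega) (by omega))) le_rfl
      have hB1 : Measurable (B (t (k+n+1))) := hBad _ (nonneg ht (by omega))
      have hB0 : Measurable (B (t (k+n))) :=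
        (hBad _ (nonneg ht (by omega))).mono (hmono _ _ (mono ht (by omega) (by omega))) le_rfl
      show Measurable (gridVal t α B k (n+2))
      have hgg : gridVal t α B k (n+2) = fun ω =>
          gridVal t α B k (n+1) ω
          + Int.fract ((gridVal t α B k (n+1) ω - gridVal t α B k n ω) / (t (k+n) - t (k+n-1)))
              * (t (k+n+1) - t (k+n))
          + (B (t (k+n+1)) ω - B (t (k+n)) ω) := rfl
      rw [hgg]
      exact ((h1'.add ((((h1'.sub h0').div_const _).fract).mul_const _))).add (hB1.sub hB0)
  intro n k hk
  exact (key n).1 k hk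

lemma driftApprox_prog (ht : TsirelsonTimes T t) (M : ℝ → MeasurableSpace Ω)
    (hmono : ∀ a b : ℝ, a ≤ b → M a ≤ M b)
    (hα : ProgMeas M α)
    (hBad : ∀ r : ℝ, 0 ≤ r → @Measurable Ω ℝ (M r) _ (B r))
    (k : ℤ) :
    ProgMeas M (driftApprox t α B k) := by
  intro s hs
  letI := M s
  have hcond : MeasurableSet {p : Set.Icc (0:ℝ) s × Ω | (p.1:ℝ) < t k} :=
    (measurable_subtype_coe.comp measurable_fst) measurableSet_Iio
  have hrest : Measurable fun p : Set.Icc (0:ℝ) s × Ω => ggA t α B k (ffIdx t ↑p.1) p.2 := by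
    refine meas_pw (M s) (fun x : Set.Icc (0:ℝ) s => ffIdx t ↑x) (ggA t α B k) ?_ ?_
    · intro j
      exact ((ffIdx_measurable ht).comp measurable_subtype_coe) (measurableSet_singleton j)
    · intro j
      by_cases hj : j ≤ -1
      · by_cases hts : t j ≤ s
        · refine Or.inr ?_
          have hgg : ggA t α B k j = fun ω =>
              Int.fract ((gridVal t α B k (j - k + 1).toNat ω - gridVal t α B k (j - k).toNat ω)
                / (t j - t (j - 1))) := by
            funext ω; rw [ggA, if_pos hj]
          rw [hgg]
          by_cases hjk : k ≤ j
          · have h1 := gridVal_meas ht M hmono hα hBad (j - k + 1).toNat k (by omega)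
            have e1 : k + (((j - k + 1).toNat : ℕ) : ℤ) - 1 = j := by omega
            rw [e1] at h1
            have h0 := gridVal_meas ht M hmono hα hBad (j - k).toNat k (by omega)
            have e0 : k + (((j - k).toNat : ℕ) : ℤ) - 1 = j - 1 := by omega
            rw [e0] at h0
            have h1' : Measurable (gridVal t α B k (j - k + 1).toNat) :=
              h1.mono (hmono _ s hts) le_rfl
            have h0' : Measurable (gridVal t α B k (j - k).toNat) :=
              h0.mono (hmono _ s (le_trans (mono ht (by omega) (by omega)) hts)) le_rfl
            exact ((h1'.sub h0').div_const _).fract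
          · have hz : (j - k + 1).toNat = (j - k).toNat := by omega
            rw [hz]
            simp only [sub_self, zero_div, Int.fract_zero]
            exact measurable_const
        · refine Or.inl ?_
          ext x
          simp only [Set.mem_setOf_eq, Set.mem_empty_iff_false, iff_false]
          intro hx
          have hmem : (↑x : ℝ) ∈ {r : ℝ | ffIdx t r = j} := hx
          rw [ffIdx_fiber ht hj] at hmem
          exact hts (le_trans hmem.1 x.2.2)
      · refine Or.inr ?_
        have hgg : ggA t α B k j = fun _ => 0 := by funext ω; rw [ggA, if_neg hj]
        rw [hgg]; exact measurable_const
  have heq : (fun p : Set.Icc (0:ℝ) s × Ω => driftApprox t α B k ↑p.1 p.2)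
      = fun p => if (p.1:ℝ) < t k then α ↑p.1 p.2 else ggA t α B k (ffIdx t ↑p.1) p.2 := rfl
  rw [heq]
  exact Measurable.ite hcond (hα s hs) hrest

lemma alphaHat_prog (ht : TsirelsonTimes T t) (M : ℝ → MeasurableSpace Ω)
    (hmono : ∀ a b : ℝ, a ≤ b → M a ≤ M b)
    (hα : ProgMeas M α)
    (hBad : ∀ r : ℝ, 0 ≤ r → @Measurable Ω ℝ (M r) _ (B r)) :
    ProgMeas M (alphaHat t α B) := by
  intro s hs
  letI := M s
  have h0 : ∀ n m : ℕ, Measurable fun p : Set.Icc (0:ℝ) s × Ω =>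
      ENNReal.ofReal (driftApprox t α B (-(n:ℤ) - (m:ℤ) - 1) ↑p.1 p.2) := fun n m =>
    ENNReal.measurable_ofReal.comp (driftApprox_prog ht M hmono hα hBad _ s hs)
  have heq : (fun p : Set.Icc (0:ℝ) s × Ω => alphaHat t α B ↑p.1 p.2)
      = fun p => (⨅ n : ℕ, ⨆ m : ℕ,
        ENNReal.ofReal (driftApprox t α B (-(n:ℤ)-(m:ℤ)-1) ↑p.1 p.2)).toReal := rfl
  rw [heq]
  exact ENNReal.measurable_toReal.comp
    (Measurable.iInf fun n => Measurable.iSup fun m => h0 n m)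

lemma xHat_prog (ht : TsirelsonTimes T t) (M : ℝ → MeasurableSpace Ω)
    (hmono : ∀ a b : ℝ, a ≤ b → M a ≤ M b)
    (hα : ProgMeas M α)
    (hBcont : ∀ ω, Continuous fun s => B s ω)
    (hBad : ∀ r : ℝ, 0 ≤ r → @Measurable Ω ℝ (M r) _ (B r)) :
    ProgMeas M (xHat t α B) := by
  intro s hs
  letI := M s
  have hh := alphaHat_prog ht M hmono hα hBad s hs
  set K : (Set.Icc (0:ℝ) s × Ω) × ℝ → ℝ := fun q =>
    if q.2 ∈ Set.Icc (0:ℝ) (q.1.1:ℝ) then glob s (alphaHat t α B) (q.2, q.1.2) else 0 with hK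
  have hKmeas : Measurable K := by
    refine Measurable.ite ?_ ?_ measurable_const
    · have h1 : MeasurableSet {q : (Set.Icc (0:ℝ) s × Ω) × ℝ | 0 ≤ q.2} :=
        measurable_snd measurableSet_Ici
      have h2 : MeasurableSet {q : (Set.Icc (0:ℝ) s × Ω) × ℝ | q.2 ≤ (q.1.1:ℝ)} :=
        measurableSet_le measurable_snd
          (measurable_subtype_coe.comp (measurable_fst.comp measurable_fst))
      have he : {q : (Set.Icc (0:ℝ) s × Ω) × ℝ | q.2 ∈ Set.Icc (0:ℝ) (q.1.1:ℝ)}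
          = {q | 0 ≤ q.2} ∩ {q | q.2 ≤ (q.1.1:ℝ)} := rfl
      rw [he]; exact h1.inter h2
    · exact (glob_meas (M s) hs hh).comp
        (measurable_snd.prodMk (measurable_snd.comp measurable_fst))
  have hKint : ∀ p : Set.Icc (0:ℝ) s × Ω,
      (∫ r in Set.Icc (0:ℝ) (p.1:ℝ), alphaHat t α B r p.2)
        = ∫ r, K (p, r) ∂(volume.restrict (Set.Icc (0:ℝ) s)) := by
    intro p
    have hKe : ∀ r : ℝ, K (p, r)
        = Set.indicator (Set.Icc (0:ℝ) (p.1:ℝ)) (fun r => alphaHat t α B r p.2) r := by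
      intro r
      by_cases hr : r ∈ Set.Icc (0:ℝ) (p.1:ℝ)
      · have : K (p, r) = glob s (alphaHat t α B) (r, p.2) := if_pos hr
        rw [this, Set.indicator_of_mem hr]
        exact glob_spec ⟨hr.1, le_trans hr.2 p.1.2.2⟩
      · have : K (p, r) = 0 := if_neg hr
        rw [this, Set.indicator_of_notMem hr]
    have h1 : (∫ r, K (p, r) ∂(volume.restrict (Set.Icc (0:ℝ) s)))
        = ∫ r, Set.indicator (Set.Icc (0:ℝ) (p.1:ℝ)) (fun r => alphaHat t α B r p.2) r
            ∂(volume.restrict (Set.Icc (0:ℝ) s)) :=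
      integral_congr_ae (Filter.Eventually.of_forall hKe)
    rw [h1, integral_indicator measurableSet_Icc,
      Measure.restrict_restrict measurableSet_Icc,
      Set.inter_eq_self_of_subset_left (Set.Icc_subset_Icc_right p.1.2.2)]
  have hmain : Measurable fun p : Set.Icc (0:ℝ) s × Ω =>
      ∫ r, K (p, r) ∂(volume.restrict (Set.Icc (0:ℝ) s)) :=
    (hKmeas.stronglyMeasurable.integral_prod_right').measurable
  have hBp := prog_B M hmono hBcont hBad s hs
  have heq : (fun p : Set.Icc (0:ℝ) s × Ω => xHat t α B ↑p.1 p.2)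
      = fun p => (∫ r, K (p, r) ∂(volume.restrict (Set.Icc (0:ℝ) s))) + B ↑p.1 p.2 := by
    funext p; rw [xHat, hKint p]
  rw [heq]
  exact hmain.add hBp

end Tsir

namespace Tsir

variable {Ω : Type*} {T : ℝ} {t : ℤ → ℝ} {α B X : ℝ → Ω → ℝ}

lemma gridVal_succ_succ (t : ℤ → ℝ) (α B : ℝ → Ω → ℝ) (k : ℤ) (n : ℕ) (ω : Ω) :
    gridVal t α B k (n+2) ω = gridVal t α B k (n+1) ω
      + Int.fract ((gridVal t α B k (n+1) ω - gridVal t α B k n ω) / (t (k+n) - t (k+n-1)))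
          * (t (k+n+1) - t (k+n))
      + (B (t (k+n+1)) ω - B (t (k+n)) ω) := rfl

lemma ae_ne (S : Set ℝ) (c : ℝ) : ∀ᵐ r ∂(volume.restrict S), r ≠ c := by
  rw [ae_iff]
  have h1 : {r : ℝ | ¬ r ≠ c} = {c} := by ext r; simp [not_not]
  rw [h1]
  have h2 : volume.restrict S {c} ≤ volume {c} := Measure.le_iff'.1 Measure.restrict_le_self {c}
  simpa [measure_singleton] using le_antisymm (by simpa [measure_singleton] using h2) (zero_le _)

lemma step_integral (ht : TsirelsonTimes T t) {f : ℝ → ℝ} {x : ℝ → ℝ} {i : ℤ}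
    (hi : i ≤ -1)
    (hae : ∀ᵐ r ∂(volume.restrict (Set.Ioc (t i) (t (i+1)))), f r = tsirelsonDrift t r x) :
    ∫ r in Set.Ioc (t i) (t (i+1)), f r
      = Int.fract ((x (t i) - x (t (i-1))) / (t i - t (i-1))) * (t (i+1) - t i) := by
  set c := Int.fract ((x (t i) - x (t (i-1))) / (t i - t (i-1))) with hc
  have h1 : ∫ r in Set.Ioc (t i) (t (i+1)), f r = ∫ _ in Set.Ioc (t i) (t (i+1)), c := by
    refine integral_congr_ae ?_
    filter_upwards [hae, ae_restrict_mem measurableSet_Ioc, ae_ne _ (t (i+1))] with r hr1 hr2 hr3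
    rw [hr1, hc]
    exact drift_eval ht x hi hr2.1.le (lt_of_le_of_ne hr2.2 hr3)
  have hlt : t i < t (i+1) := strict_mono ht (by omega) (by omega)
  rw [h1, setIntegral_const, Measure.real, Real.volume_Ioc, ENNReal.toReal_ofReal (by linarith), smul_eq_mul,
    mul_comm]

/-- On the event `E_{k₀}`, the recursion grid values agree with `X` below `t k₀`. -/
lemma gridVal_eq_X (ht : TsirelsonTimes T t) {ω : Ω}
    (hsde : ∀ s ∈ Set.Icc (0:ℝ) T, X s ω = (∫ r in Set.Icc (0:ℝ) s, α r ω) + B s ω)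
    (hint : ∀ S : Set ℝ, MeasurableSet S → S ⊆ Set.Icc (0:ℝ) T →
      IntegrableOn (fun r => α r ω) S volume)
    {k₀ : ℤ} (hk₀ : k₀ ≤ -1)
    (hD : ∀ᵐ r ∂(volume.restrict (Set.Icc (0:ℝ) (t k₀))),
      α r ω = tsirelsonDrift t r (fun u => X u ω))
    {k : ℤ} (hk : k ≤ k₀) :
    ∀ n : ℕ, k + n - 1 ≤ k₀ → gridVal t α B k n ω = X (t (k + n - 1)) ω := by
  have hsde' : ∀ i : ℤ, i ≤ 0 → X (t i) ω = (∫ r in Set.Icc (0:ℝ) (t i), α r ω) + B (t i) ω :=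
    fun i hi => hsde (t i) ⟨nonneg ht hi, le_T ht hi⟩
  have key : ∀ n : ℕ,
      (k + n - 1 ≤ k₀ → gridVal t α B k n ω = X (t (k + n - 1)) ω)
      ∧ (k + (n+1) - 1 ≤ k₀ → gridVal t α B k (n+1) ω = X (t (k + (n+1) - 1)) ω) := by
    intro n
    induction n with
    | zero =>
      constructor
      · intro hn
        have e : k + ((0:ℕ):ℤ) - 1 = k - 1 := by simp
        rw [e]
        exact (hsde' (k-1) (by omega)).symm
      · intro hn
        have e : k + (((0:ℕ):ℤ) + 1) - 1 = k := by simp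
        rw [e]
        exact (hsde' k (by omega)).symm
    | succ n ihn =>
      refine ⟨ihn.2, ?_⟩
      intro hn
      have hn' : k + n + 1 ≤ k₀ := by push_cast at hn; omega
      have e : k + (((n+1:ℕ):ℤ) + 1) - 1 = k + n + 1 := by push_cast; ring
      rw [e]
      have h1 : gridVal t α B k (n+1) ω = X (t (k + n)) ω := by
        have := ihn.2 (by push_cast; omega)
        have e1 : k + (((n:ℕ):ℤ) + 1) - 1 = k + n := by ring
        rwa [e1] at this
      have h0 : gridVal t α B k n ω = X (t (k + n - 1)) ω := by
        have := ihn.1 (by push_cast; omega)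
        exact this
      -- the SDE step across `(t (k+n), t (k+n+1)]`
      have hab : t (k+n) ≤ t (k+n+1) := mono ht (by omega) (by omega)
      have h0a : (0:ℝ) ≤ t (k+n) := nonneg ht (by omega)
      have hbT : Set.Icc (0:ℝ) (t (k+n+1)) ⊆ Set.Icc (0:ℝ) T :=
        Set.Icc_subset_Icc_right (le_T ht (by omega))
      have hsplit : (∫ r in Set.Icc (0:ℝ) (t (k+n+1)), α r ω)
          = (∫ r in Set.Icc (0:ℝ) (t (k+n)), α r ω)
            + ∫ r in Set.Ioc (t (k+n)) (t (k+n+1)), α r ω := by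
        rw [← Set.Icc_union_Ioc_eq_Icc h0a hab]
        exact setIntegral_union ((Set.Iic_disjoint_Ioc le_rfl).mono_left Set.Icc_subset_Iic_self)
          measurableSet_Ioc
          (hint _ measurableSet_Icc (fun x hx => hbT ⟨hx.1, le_trans hx.2 hab⟩))
          (hint _ measurableSet_Ioc (fun x hx => hbT ⟨le_trans h0a hx.1.le, hx.2⟩))
      have hstep : (∫ r in Set.Ioc (t (k+n)) (t (k+n+1)), α r ω)
          = Int.fract ((X (t (k+n)) ω - X (t (k+n-1)) ω) / (t (k+n) - t (k+n-1)))
              * (t (k+n+1) - t (k+n)) := by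
        refine step_integral ht (x := fun u => X u ω) (i := k + n) (by omega) ?_
        refine ae_restrict_of_ae_restrict_of_subset ?_ hD
        intro r hr
        exact ⟨le_trans h0a hr.1.le, le_trans hr.2 (mono ht (by omega) (by omega))⟩
      have hXa := hsde' (k+n) (by omega)
      have hXb := hsde' (k+n+1) (by omega)
      rw [gridVal_succ_succ, h1, h0]
      linarith [hXa, hXb, hsplit, hstep]
  intro n hn
  exact (key n).1 hn

/-- Under `E_{k₀}`, the approximations at levels `k ≤ k₀` all coincide (grid values). -/
lemma gridVal_shift (ht : TsirelsonTimes T t) {ω : Ω}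
    (hsde : ∀ s ∈ Set.Icc (0:ℝ) T, X s ω = (∫ r in Set.Icc (0:ℝ) s, α r ω) + B s ω)
    (hint : ∀ S : Set ℝ, MeasurableSet S → S ⊆ Set.Icc (0:ℝ) T →
      IntegrableOn (fun r => α r ω) S volume)
    {k₀ : ℤ} (hk₀ : k₀ ≤ -1)
    (hD : ∀ᵐ r ∂(volume.restrict (Set.Icc (0:ℝ) (t k₀))),
      α r ω = tsirelsonDrift t r (fun u => X u ω))
    {k : ℤ} (hk : k ≤ k₀) :
    ∀ n : ℕ, gridVal t α B k ((k₀ - k).toNat + n) ω = gridVal t α B k₀ n ω := by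
  set M := (k₀ - k).toNat with hM
  have hMv : (M:ℤ) = k₀ - k := Int.toNat_of_nonneg (by omega)
  have hX := gridVal_eq_X (X := X) ht hsde hint hk₀ hD (k := k) hk
  have hX₀ := gridVal_eq_X (X := X) ht hsde hint hk₀ hD (k := k₀) le_rfl
  have key : ∀ n : ℕ,
      (gridVal t α B k (M + n) ω = gridVal t α B k₀ n ω)
      ∧ (gridVal t α B k (M + (n+1)) ω = gridVal t α B k₀ (n+1) ω) := by
    intro n
    induction n with
    | zero =>
      constructor
      · have h1 := hX M (by omega)
        have h2 := hX₀ 0 (by simp)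
        have e1 : k + (M:ℤ) - 1 = k₀ - 1 := by omega
        have e2 : k₀ + ((0:ℕ):ℤ) - 1 = k₀ - 1 := by simp
        rw [e1] at h1
        rw [e2] at h2
        have e3 : M + 0 = M := rfl
        rw [e3, h1, h2]
      · have h1 := hX (M+1) (by push_cast; omega)
        have h2 := hX₀ 1 (by push_cast; omega)
        have e1 : k + ((M+1:ℕ):ℤ) - 1 = k₀ := by push_cast; omega
        have e2 : k₀ + ((1:ℕ):ℤ) - 1 = k₀ := by simp
        rw [e1] at h1
        rw [e2] at h2
        rw [h1, h2]
    | succ n ihn =>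
      refine ⟨ihn.2, ?_⟩
      have ih1 : gridVal t α B k (M+n+1) ω = gridVal t α B k₀ (n+1) ω := ihn.2
      have ih0 : gridVal t α B k (M+n) ω = gridVal t α B k₀ n ω := ihn.1
      show gridVal t α B k (M+n+2) ω = gridVal t α B k₀ (n+2) ω
      rw [gridVal_succ_succ t α B k (M+n) ω, gridVal_succ_succ t α B k₀ n ω, ih1, ih0]
      have e1 : k + ((M+n:ℕ):ℤ) = k₀ + n := by push_cast; omega
      rw [e1]
  intro n
  exact (key n).1

/-- stabilization of the approximations in `k`, off the negligible bad set. -/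
lemma driftApprox_stab (ht : TsirelsonTimes T t) {ω : Ω}
    (hsde : ∀ s ∈ Set.Icc (0:ℝ) T, X s ω = (∫ r in Set.Icc (0:ℝ) s, α r ω) + B s ω)
    (hint : ∀ S : Set ℝ, MeasurableSet S → S ⊆ Set.Icc (0:ℝ) T →
      IntegrableOn (fun r => α r ω) S volume)
    {k₀ : ℤ} (hk₀ : k₀ ≤ -1)
    (hD : ∀ᵐ r ∂(volume.restrict (Set.Icc (0:ℝ) (t k₀))),
      α r ω = tsirelsonDrift t r (fun u => X u ω))
    {s : ℝ}
    (hgood : s ∈ Set.Icc (0:ℝ) (t k₀) → α s ω = tsirelsonDrift t s (fun u => X u ω))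
    {k : ℤ} (hk : k ≤ k₀) :
    driftApprox t α B k s ω = driftApprox t α B k₀ s ω := by
  have hX := gridVal_eq_X (X := X) ht hsde hint hk₀ hD (k := k) hk
  by_cases h1 : s < t k
  · rw [driftApprox_lt h1, driftApprox_lt (lt_of_lt_of_le h1 (mono ht hk (by omega)))]
  · by_cases h2 : s < t k₀
    · have hs0 : 0 < s := lt_of_lt_of_le (pos ht (by omega : k ≤ 0)) (not_lt.1 h1)
      have hsT : s < T := lt_of_lt_of_le h2 (le_T ht (by omega))
      obtain ⟨j, hj, hj1, hj2⟩ := exists_interval ht hs0 hsT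
      have hjk : k ≤ j := by
        by_contra hcon
        exact h1 (lt_of_lt_of_le hj2 (mono ht (by omega) (by omega)))
      have hjk₀ : j ≤ k₀ - 1 := by
        by_contra hcon
        exact (not_lt.2 hj1) (lt_of_lt_of_le h2 (mono ht (by omega) (by omega)))
      rw [driftApprox_interval ht h1 hj hj1 hj2]
      have hg1 := hX (j - k + 1).toNat (by omega)
      have hg0 := hX (j - k).toNat (by omega)
      have e1 : k + (((j - k + 1).toNat : ℕ) : ℤ) - 1 = j := by omega
      have e0 : k + (((j - k).toNat : ℕ) : ℤ) - 1 = j - 1 := by omega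
      rw [e1] at hg1
      rw [e0] at hg0
      rw [hg1, hg0, driftApprox_lt h2,
        hgood ⟨hs0.le, h2.le⟩, drift_eval ht (fun u => X u ω) hj hj1 hj2]
    · have hsh := gridVal_shift (X := X) ht hsde hint hk₀ hD (k := k) hk
      have h1' : ¬ s < t k₀ := h2
      by_cases hex : ∃ j : ℤ, j ≤ -1 ∧ t j ≤ s ∧ s < t (j + 1)
      · obtain ⟨j, hj, hj1, hj2⟩ := hex
        have hjk₀ : k₀ ≤ j := by
          by_contra hcon
          exact h2 (lt_of_lt_of_le hj2 (mono ht (by omega) (by omega)))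
        rw [driftApprox_interval ht h1 hj hj1 hj2, driftApprox_interval ht h1' hj hj1 hj2]
        have e1 : (j - k + 1).toNat = (k₀ - k).toNat + (j - k₀ + 1).toNat := by omega
        have e0 : (j - k).toNat = (k₀ - k).toNat + (j - k₀).toNat := by omega
        rw [e1, e0, hsh _, hsh _]
      · rw [driftApprox_none h1 hex, driftApprox_none h1' hex]

end Tsir

namespace Tsir

variable {Ω : Type*} {T : ℝ} {t : ℤ → ℝ} {α B X : ℝ → Ω → ℝ}

/-- The per-`ω` hypotheses: the SDE holds, sections are integrable, and `ω ∈ E_{k₀}`. -/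
structure GoodAt (T : ℝ) (t : ℤ → ℝ) (α B X : ℝ → Ω → ℝ) (ω : Ω) (k₀ : ℤ) : Prop where
  hk₀ : k₀ ≤ -1
  hsde : ∀ s ∈ Set.Icc (0:ℝ) T, X s ω = (∫ r in Set.Icc (0:ℝ) s, α r ω) + B s ω
  hint : ∀ S : Set ℝ, MeasurableSet S → S ⊆ Set.Icc (0:ℝ) T →
    IntegrableOn (fun r => α r ω) S volume
  hintA : ∀ S : Set ℝ, MeasurableSet S → S ⊆ Set.Icc (0:ℝ) T →
    IntegrableOn (fun r => driftApprox t α B k₀ r ω) S volume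
  hD : ∀ᵐ r ∂(volume.restrict (Set.Icc (0:ℝ) (t k₀))),
    α r ω = tsirelsonDrift t r (fun u => X u ω)

lemma alphaHat_ae (ht : TsirelsonTimes T t) (hmem : ∀ s ω, α s ω ∈ Set.Icc (0:ℝ) 1)
    {ω : Ω} {k₀ : ℤ} (hg : GoodAt T t α B X ω k₀) :
    ∀ᵐ s ∂(volume : Measure ℝ), alphaHat t α B s ω = driftApprox t α B k₀ s ω := by
  have hset : volume ({s : ℝ | ¬ α s ω = tsirelsonDrift t s (fun u => X u ω)}
      ∩ Set.Icc (0:ℝ) (t k₀)) = 0 := by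
    have h1 := ae_iff.1 hg.hD
    rwa [Measure.restrict_apply' measurableSet_Icc] at h1
  rw [ae_iff]
  refine measure_mono_null (fun s hs => ?_) hset
  simp only [Set.mem_setOf_eq] at hs
  by_contra hnot
  apply hs
  refine alphaHat_eval hg.hk₀ (fun k hk => ?_) (driftApprox_mem hmem k₀ s ω).1
  refine driftApprox_stab (X := X) ht hg.hsde hg.hint hg.hk₀ hg.hD (fun hmem' => ?_) hk
  by_contra hne
  exact hnot ⟨hne, hmem'⟩

lemma xHat_eq_X (ht : TsirelsonTimes T t) (hmem : ∀ s ω, α s ω ∈ Set.Icc (0:ℝ) 1)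
    {ω : Ω} {k₀ : ℤ} (hg : GoodAt T t α B X ω k₀) {i : ℤ} (hi : i ≤ k₀) :
    xHat t α B (t i) ω = X (t i) ω := by
  have hk₀ := hg.hk₀
  have hae := alphaHat_ae ht hmem hg
  have h1 : (∫ r in Set.Icc (0:ℝ) (t i), alphaHat t α B r ω)
      = ∫ r in Set.Icc (0:ℝ) (t i), driftApprox t α B k₀ r ω :=
    integral_congr_ae (ae_restrict_of_ae hae)
  have h2 : (∫ r in Set.Icc (0:ℝ) (t i), driftApprox t α B k₀ r ω)
      = ∫ r in Set.Icc (0:ℝ) (t i), α r ω := by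
    refine integral_congr_ae ?_
    filter_upwards [ae_restrict_mem measurableSet_Icc, ae_ne _ (t k₀)] with r hr hrne
    exact driftApprox_lt (lt_of_le_of_ne (le_trans hr.2 (mono ht hi (by omega))) hrne)
  rw [xHat, h1, h2, ← hg.hsde (t i) ⟨nonneg ht (by omega), le_T ht (by omega)⟩]

lemma xHat_grid (ht : TsirelsonTimes T t) (hmem : ∀ s ω, α s ω ∈ Set.Icc (0:ℝ) 1)
    {ω : Ω} {k₀ : ℤ} (hg : GoodAt T t α B X ω k₀) :
    ∀ n : ℕ, (k₀ - 1 + n ≤ 0) → xHat t α B (t (k₀ - 1 + n)) ω = gridVal t α B k₀ n ω := by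
  have hae := alphaHat_ae ht hmem hg
  have hX₀ := gridVal_eq_X (X := X) ht hg.hsde hg.hint hg.hk₀ hg.hD (k := k₀) le_rfl
  have hIcongr : ∀ c : ℝ, (∫ r in Set.Icc (0:ℝ) c, alphaHat t α B r ω)
      = ∫ r in Set.Icc (0:ℝ) c, driftApprox t α B k₀ r ω :=
    fun c => integral_congr_ae (ae_restrict_of_ae hae)
  have key : ∀ n : ℕ,
      ((k₀ - 1 + (n:ℤ) ≤ 0) → xHat t α B (t (k₀ - 1 + (n:ℤ))) ω = gridVal t α B k₀ n ω)
      ∧ ((k₀ - 1 + ((n:ℤ)+1) ≤ 0) →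
          xHat t α B (t (k₀ - 1 + ((n:ℤ)+1))) ω = gridVal t α B k₀ (n+1) ω) := by
    intro n
    induction n with
    | zero =>
      constructor
      · intro hn
        have e : k₀ - 1 + ((0:ℕ):ℤ) = k₀ - 1 := by simp
        rw [e]
        have h2 := hX₀ 0 (by push_cast; omega)
        have e2 : k₀ + ((0:ℕ):ℤ) - 1 = k₀ - 1 := by simp
        rw [e2] at h2
        rw [h2]
        exact xHat_eq_X ht hmem hg (by omega)
      · intro hn
        have e : k₀ - 1 + (((0:ℕ):ℤ)+1) = k₀ := by simp
        rw [e]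
        have h2 := hX₀ 1 (by push_cast; omega)
        have e2 : k₀ + ((1:ℕ):ℤ) - 1 = k₀ := by simp
        rw [e2] at h2
        show xHat t α B (t k₀) ω = gridVal t α B k₀ 1 ω
        rw [h2]
        exact xHat_eq_X ht hmem hg (by omega)
    | succ n ihn =>
      constructor
      · intro hn
        have := ihn.2 (by push_cast at hn ⊢; omega)
        have e : k₀ - 1 + (((n:ℕ):ℤ)+1) = k₀ - 1 + ((n+1:ℕ):ℤ) := by push_cast; ring
        rwa [e] at this
      · intro hn
        have hn' : k₀ + n + 1 ≤ 0 := by push_cast at hn; omega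
        have e : k₀ - 1 + (((n+1:ℕ):ℤ)+1) = k₀ + n + 1 := by push_cast; ring
        rw [e]
        -- previous grid point
        have h1 : xHat t α B (t (k₀ + n)) ω = gridVal t α B k₀ (n+1) ω := by
          have := ihn.2 (by push_cast; omega)
          have e1 : k₀ - 1 + (((n:ℕ):ℤ)+1) = k₀ + n := by push_cast; ring
          rwa [e1] at this
        have hab : t (k₀+n) ≤ t (k₀+n+1) := mono ht (by omega) (by omega)
        have h0a : (0:ℝ) ≤ t (k₀+n) := nonneg ht (by omega)
        have hbT : Set.Icc (0:ℝ) (t (k₀+n+1)) ⊆ Set.Icc (0:ℝ) T :=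
          Set.Icc_subset_Icc_right (le_T ht (by omega))
        have hsplit : (∫ r in Set.Icc (0:ℝ) (t (k₀+n+1)), driftApprox t α B k₀ r ω)
            = (∫ r in Set.Icc (0:ℝ) (t (k₀+n)), driftApprox t α B k₀ r ω)
              + ∫ r in Set.Ioc (t (k₀+n)) (t (k₀+n+1)), driftApprox t α B k₀ r ω := by
          rw [← Set.Icc_union_Ioc_eq_Icc h0a hab]
          exact setIntegral_union
            ((Set.Iic_disjoint_Ioc le_rfl).mono_left Set.Icc_subset_Iic_self)
            measurableSet_Ioc
            (hg.hintA _ measurableSet_Icc (fun x hx => hbT ⟨hx.1, le_trans hx.2 hab⟩))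
            (hg.hintA _ measurableSet_Ioc (fun x hx => hbT ⟨le_trans h0a hx.1.le, hx.2⟩))
        have hconst : (∫ r in Set.Ioc (t (k₀+n)) (t (k₀+n+1)), driftApprox t α B k₀ r ω)
            = Int.fract ((gridVal t α B k₀ (n+1) ω - gridVal t α B k₀ n ω)
                / (t (k₀+n) - t (k₀+n-1))) * (t (k₀+n+1) - t (k₀+n)) := by
          have hcg : ∀ᵐ r ∂(volume.restrict (Set.Ioc (t (k₀+n)) (t (k₀+n+1)))),
              driftApprox t α B k₀ r ω
              = Int.fract ((gridVal t α B k₀ (n+1) ω - gridVal t α B k₀ n ω)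
                  / (t (k₀+n) - t (k₀+n-1))) := by
            filter_upwards [ae_restrict_mem measurableSet_Ioc, ae_ne _ (t (k₀+n+1))]
              with r hr hrne
            have hr2 : r < t (k₀+n+1) := lt_of_le_of_ne hr.2 hrne
            have hnotlt : ¬ r < t k₀ :=
              not_lt.2 (le_trans (mono ht (by omega) (by omega)) hr.1.le)
            rw [driftApprox_interval ht hnotlt (by omega : k₀+n ≤ -1) hr.1.le hr2]
            have e1 : (k₀ + n - k₀ + 1).toNat = n + 1 := by omega
            have e0 : (k₀ + n - k₀).toNat = n := by omega
            rw [e1, e0]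
          rw [integral_congr_ae hcg, setIntegral_const, Measure.real, Real.volume_Ioc,
            ENNReal.toReal_ofReal (by linarith), smul_eq_mul, mul_comm]
        have hPrev : (∫ r in Set.Icc (0:ℝ) (t (k₀+n)), driftApprox t α B k₀ r ω)
            = xHat t α B (t (k₀+n)) ω - B (t (k₀+n)) ω := by
          rw [← hIcongr, xHat]; ring
        show xHat t α B (t (k₀+n+1)) ω = gridVal t α B k₀ (n+2) ω
        rw [gridVal_succ_succ, xHat, hIcongr, hsplit, hconst, hPrev, h1]
        ring
  intro n hn
  exact (key n).1 hn

/-- the per-`ω` a.e. identity between `alphaHat` and the Tsirelson drift of `xHat`. -/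
lemma final_ae (ht : TsirelsonTimes T t) (hT : 0 < T)
    (hmem : ∀ s ω, α s ω ∈ Set.Icc (0:ℝ) 1)
    {ω : Ω} {k₀ : ℤ} (hg : GoodAt T t α B X ω k₀) :
    ∀ᵐ s ∂(volume.restrict (Set.Icc (0:ℝ) T)),
      alphaHat t α B s ω = tsirelsonDrift t s (fun u => xHat t α B u ω) := by
  have hk₀ := hg.hk₀
  have hae := alphaHat_ae ht hmem hg
  have hset : volume ({s : ℝ | ¬ α s ω = tsirelsonDrift t s (fun u => X u ω)}
      ∩ Set.Icc (0:ℝ) (t k₀)) = 0 := by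
    have h1 := ae_iff.1 hg.hD
    rwa [Measure.restrict_apply' measurableSet_Icc] at h1
  have hbad : ∀ᵐ s ∂(volume : Measure ℝ),
      ¬ (s ∈ {s : ℝ | ¬ α s ω = tsirelsonDrift t s (fun u => X u ω)}
        ∧ s ∈ Set.Icc (0:ℝ) (t k₀)) := by
    rw [ae_iff]
    refine measure_mono_null (fun s hs => ?_) hset
    simp only [Set.mem_setOf_eq, not_not] at hs
    push_neg at hs
    exact hs
  filter_upwards [ae_restrict_of_ae hae, ae_restrict_of_ae hbad,
    ae_ne (Set.Icc (0:ℝ) T) 0, ae_restrict_mem measurableSet_Icc]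
    with s h6 hbadp hne hmemT
  have hs0 : 0 < s := lt_of_le_of_ne hmemT.1 (Ne.symm hne)
  rw [h6]
  by_cases hex : ∃ j : ℤ, j ≤ -1 ∧ t j ≤ s ∧ s < t (j + 1)
  · obtain ⟨j, hj, hj1, hj2⟩ := hex
    by_cases h2 : s < t k₀
    · have hjk : j ≤ k₀ - 1 := by
        by_contra hcon
        exact (not_lt.2 hj1) (lt_of_lt_of_le h2 (mono ht (by omega) (by omega)))
      have hα : α s ω = tsirelsonDrift t s (fun u => X u ω) := by
        by_contra hne'
        exact hbadp ⟨hne', ⟨hs0.le, h2.le⟩⟩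
      rw [driftApprox_lt h2, hα, drift_eval ht (fun u => X u ω) hj hj1 hj2,
        drift_eval ht (fun u => xHat t α B u ω) hj hj1 hj2,
        xHat_eq_X ht hmem hg (by omega : j ≤ k₀),
        xHat_eq_X ht hmem hg (by omega : j - 1 ≤ k₀)]
    · have hjk₀ : k₀ ≤ j := by
        by_contra hcon
        exact h2 (lt_of_lt_of_le hj2 (mono ht (by omega) (by omega)))
      rw [driftApprox_interval ht h2 hj hj1 hj2,
        drift_eval ht (fun u => xHat t α B u ω) hj hj1 hj2]
      have hxj : xHat t α B (t j) ω = gridVal t α B k₀ (j - k₀ + 1).toNat ω := by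
        have := xHat_grid ht hmem hg (j - k₀ + 1).toNat (by omega)
        have e : k₀ - 1 + (((j - k₀ + 1).toNat : ℕ) : ℤ) = j := by omega
        rwa [e] at this
      have hxj1 : xHat t α B (t (j-1)) ω = gridVal t α B k₀ (j - k₀).toNat ω := by
        have := xHat_grid ht hmem hg (j - k₀).toNat (by omega)
        have e : k₀ - 1 + (((j - k₀).toNat : ℕ) : ℤ) = j - 1 := by omega
        rwa [e] at this
      rw [hxj, hxj1]
  · have hnotlt : ¬ s < t k₀ := by
      intro hcon
      exact hex (exists_interval ht hs0
        (lt_of_lt_of_le hcon (le_T ht (by omega))))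
    rw [driftApprox_none hnotlt hex, drift_eval_none _ hex]

end Tsir

namespace Tsir

variable {Ω : Type*} {T : ℝ} {t : ℤ → ℝ} {α B X : ℝ → Ω → ℝ}

lemma drift_mem (t : ℤ → ℝ) (s : ℝ) (x : ℝ → ℝ) :
    tsirelsonDrift t s x ∈ Set.Icc (0:ℝ) 1 := by
  rw [tsirelsonDrift]
  split_ifs with h
  · exact ⟨Int.fract_nonneg _, (Int.fract_lt_one _).le⟩
  · exact ⟨le_rfl, zero_le_one⟩

lemma eval_meas (M : MeasurableSpace Ω) {c : ℝ} {u : ℝ → Ω → ℝ}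
    (hu : @Measurable (Set.Icc (0:ℝ) c × Ω) ℝ (MeasurableSpace.prod inferInstance M) _
      (fun p => u p.1 p.2))
    {r : ℝ} (hr : r ∈ Set.Icc (0:ℝ) c) : @Measurable Ω ℝ M _ (u r) := by
  letI := M
  exact hu.comp ((measurable_const (a := (⟨r, hr⟩ : Set.Icc (0:ℝ) c))).prodMk measurable_id)

lemma drift_meas_pw {γ : Type*} [MeasurableSpace γ] (ht : TsirelsonTimes T t)
    (M : MeasurableSpace Ω) (Y : ℝ → Ω → ℝ) (τ : γ → ℝ) (hτ : Measurable τ)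
    (hYt : ∀ j : ℤ, j ≤ 0 → @Measurable Ω ℝ M _ (Y (t j))) :
    @Measurable (γ × Ω) ℝ (MeasurableSpace.prod inferInstance M) _
      (fun p => tsirelsonDrift t (τ p.1) (fun u => Y u p.2)) := by
  have heq : (fun p : γ × Ω => tsirelsonDrift t (τ p.1) (fun u => Y u p.2))
      = fun p => (fun (j : ℤ) (ω : Ω) => if j ≤ -1 then
          Int.fract ((Y (t j) ω - Y (t (j-1)) ω) / (t j - t (j-1))) else 0)
          (ffIdx t (τ p.1)) p.2 := by
    funext p
    rw [drift_eq_ff ht]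
  rw [heq]
  refine meas_pw M (fun x => ffIdx t (τ x))
    (fun (j : ℤ) (ω : Ω) => if j ≤ -1 then
      Int.fract ((Y (t j) ω - Y (t (j-1)) ω) / (t j - t (j-1))) else 0)
    (fun j => ((ffIdx_measurable ht).comp hτ) (measurableSet_singleton j))
    (fun j => Or.inr ?_)
  by_cases hj : j ≤ -1
  · simp only [if_pos hj]
    letI := M
    exact (((hYt j (by omega)).sub (hYt (j-1) (by omega))).div_const _).fract
  · simp only [if_neg hj]
    exact measurable_const

lemma drift_path_meas (ht : TsirelsonTimes T t) {ω : Ω} :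
    Measurable (fun r => tsirelsonDrift t r (fun u => X u ω)) := by
  have heq : (fun r => tsirelsonDrift t r (fun u => X u ω))
      = (fun (j : ℤ) => if j ≤ -1 then
          Int.fract ((X (t j) ω - X (t (j-1)) ω) / (t j - t (j-1))) else 0) ∘ (ffIdx t) := by
    funext r
    rw [drift_eq_ff ht]
    rfl
  rw [heq]
  exact measurable_from_top.comp (ffIdx_measurable ht)

lemma hD_of_int_eq_zero (ht : TsirelsonTimes T t)
    (hmem : ∀ s ω, α s ω ∈ Set.Icc (0:ℝ) 1) {ω : Ω} {k₀ : ℤ}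
    (hsect : AEMeasurable (fun r => α r ω) (volume.restrict (Set.Icc (0:ℝ) (t k₀))))
    (hz : (∫ s in Set.Icc (0:ℝ) (t k₀), |α s ω - tsirelsonDrift t s (fun u => X u ω)|) = 0) :
    ∀ᵐ r ∂(volume.restrict (Set.Icc (0:ℝ) (t k₀))),
      α r ω = tsirelsonDrift t r (fun u => X u ω) := by
  haveI := finite_restrict (Set.Subset.rfl : Set.Icc (0:ℝ) (t k₀) ⊆ Set.Icc (0:ℝ) (t k₀))
  have ham : AEMeasurable (fun r => |α r ω - tsirelsonDrift t r (fun u => X u ω)|)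
      (volume.restrict (Set.Icc (0:ℝ) (t k₀))) :=
    measurable_abs.comp_aemeasurable
      (hsect.sub (drift_path_meas (X := X) ht).aemeasurable)
  have hbd : Integrable (fun r => |α r ω - tsirelsonDrift t r (fun u => X u ω)|)
      (volume.restrict (Set.Icc (0:ℝ) (t k₀))) := by
    refine Integrable.mono' (integrable_const 2) ham.aestronglyMeasurable ?_
    refine Filter.Eventually.of_forall fun r => ?_
    rw [Real.norm_eq_abs, abs_abs]
    have h1 := hmem r ω
    have h2 := drift_mem t r (fun u => X u ω)
    rw [abs_le]
    constructor <;> [linarith [h1.1, h2.2]; linarith [h1.2, h2.1]]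
  have h0 : (0 : ℝ → ℝ) ≤ᵐ[volume.restrict (Set.Icc (0:ℝ) (t k₀))]
      fun r => |α r ω - tsirelsonDrift t r (fun u => X u ω)| :=
    Filter.Eventually.of_forall fun r => abs_nonneg _
  have hae := (integral_eq_zero_iff_of_nonneg_ae h0 hbd).1 hz
  filter_upwards [hae] with r hr
  exact sub_eq_zero.1 (abs_eq_zero.1 hr)

end Tsir


/-- If, for an open-loop weak solution, `P(E_∞) = 1` where
`E_k = {∫_0^{t_k} |α_s - μ(s, X)| ds = 0}` and `E_∞ = lim_{k→-∞} E_k`, then there exist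
`𝔽^B`-progressively measurable processes `α̂, X̂` with `α̂_s = μ(s, X̂)` and
`X̂_s = ∫_0^s α̂_r dr + B_s` for `ds × dP`-a.e. `(s, ω)`; i.e. Tsirelson's SDE then admits
a strong solution. -/
theorem strong_solution_from_full_Einf
    (T : ℝ) (hT : 0 < T) (t : ℤ → ℝ) (ht : TsirelsonTimes T t)
    {Ω : Type*} [MeasurableSpace Ω] (P : Measure Ω) [IsProbabilityMeasure P]
    (F : ℝ → MeasurableSpace Ω)
    (hF_mono : ∀ s u : ℝ, s ≤ u → F s ≤ F u)
    (hF_le : ∀ s : ℝ, F s ≤ (inferInstance : MeasurableSpace Ω))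
    (B X α : ℝ → Ω → ℝ) (hB : IsBM P F B)
    (hα_prog : ProgMeas F α) (hα_mem : ∀ s ω, α s ω ∈ Set.Icc (0 : ℝ) 1)
    (hX_cont : ∀ ω, Continuous fun s => X s ω) (hX_prog : ProgMeas F X)
    (hsde : ∀ᵐ ω ∂P, ∀ s ∈ Set.Icc (0 : ℝ) T,
      X s ω = (∫ r in Set.Icc (0 : ℝ) s, α r ω) + B s ω)
    (hopen : ProgMeas (augFilt P B) α)
    (hEinf : P (⋃ k : ℤ, ⋃ _ : k ≤ -1,
      {ω | (∫ s in Set.Icc (0 : ℝ) (t k),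
        |α s ω - tsirelsonDrift t s (fun u => X u ω)|) = 0}) = 1) :
    ∃ αh Xh : ℝ → Ω → ℝ,
      ProgMeas (augFilt P B) αh ∧ ProgMeas (augFilt P B) Xh ∧
      (∀ᵐ p ∂((volume.restrict (Set.Icc (0 : ℝ) T)).prod P),
        αh p.1 p.2 = tsirelsonDrift t p.1 (fun u => Xh u p.2) ∧
        Xh p.1 p.2 = (∫ r in Set.Icc (0 : ℝ) p.1, αh r p.2) + B p.1 p.2) := by
  classical
  -- the constant (full) filtration
  set F2 : ℝ → MeasurableSpace Ω := fun _ => (inferInstance : MeasurableSpace Ω) with hF2def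
  -- facts about the augmented Brownian filtration
  have hmono₁ : ∀ a b : ℝ, a ≤ b → augFilt P B a ≤ augFilt P B b := by
    intro a b hab
    refine sup_le_sup_right ?_ _
    exact biSup_mono (fun r hr => ⟨hr.1, le_trans hr.2 hab⟩)
  have hB₁ad : ∀ r : ℝ, 0 ≤ r → Measurable[augFilt P B r] (B r) := by
    intro r hr
    rw [measurable_iff_comap_le]
    refine le_trans ?_ le_sup_left
    exact le_biSup (fun r' => MeasurableSpace.comap (B r') inferInstance)
      (⟨hr, le_rfl⟩ : r ∈ Set.Icc (0:ℝ) r)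
  -- transfer of progressive measurability to the full σ-algebra
  have hmono₂ : ∀ a b : ℝ, a ≤ b → F2 a ≤ F2 b := fun _ _ _ => le_rfl
  have hα₂ : ProgMeas F2 α := fun s hs =>
    (hα_prog s hs).mono (Tsir.prod_mono _ (hF_le s)) le_rfl
  have hX₂ : ProgMeas F2 X := fun s hs =>
    (hX_prog s hs).mono (Tsir.prod_mono _ (hF_le s)) le_rfl
  have hB₂ad : ∀ r : ℝ, 0 ≤ r → Measurable[F2 r] (B r) := fun r hr =>
    (hB.2.2.1 r hr).mono (hF_le r) le_rfl
  -- progressive measurability of the candidate solution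
  have hprogα : ProgMeas (augFilt P B) (Tsir.alphaHat t α B) :=
    Tsir.alphaHat_prog ht (augFilt P B) hmono₁ hopen hB₁ad
  have hprogX : ProgMeas (augFilt P B) (Tsir.xHat t α B) :=
    Tsir.xHat_prog ht (augFilt P B) hmono₁ hopen hB.2.1 hB₁ad
  have hαHat₂ : ProgMeas F2 (Tsir.alphaHat t α B) :=
    Tsir.alphaHat_prog ht F2 hmono₂ hα₂ hB₂ad
  have hA₂ : ∀ k : ℤ, ProgMeas F2 (Tsir.driftApprox t α B k) := fun k =>
    Tsir.driftApprox_prog ht F2 hmono₂ hα₂ hB₂ad k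
  -- measurability of the events E_k
  have hXt : ∀ j : ℤ, j ≤ 0 → Measurable (X (t j)) := fun j hj =>
    Tsir.eval_meas (inferInstance : MeasurableSpace Ω)
      (hX₂ (t j) (Tsir.nonneg ht hj)) ⟨Tsir.nonneg ht hj, le_rfl⟩
  have hEm : ∀ k : ℤ, k ≤ -1 → MeasurableSet {ω | (∫ s in Set.Icc (0 : ℝ) (t k),
      |α s ω - tsirelsonDrift t s (fun u => X u ω)|) = 0} := by
    intro k hk
    have hmeas : Measurable fun ω => ∫ s in Set.Icc (0 : ℝ) (t k),
        |α s ω - tsirelsonDrift t s (fun u => X u ω)| := by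
      refine Tsir.meas_integral (inferInstance : MeasurableSpace Ω) ?_
      have h1 := hα₂ (t k) (Tsir.nonneg ht (by omega))
      have h2 := Tsir.drift_meas_pw ht (inferInstance : MeasurableSpace Ω) X
        (fun x : Set.Icc (0:ℝ) (t k) => (x : ℝ)) measurable_subtype_coe hXt
      exact (h1.sub h2).abs
    exact hmeas (measurableSet_singleton 0)
  have hUm : MeasurableSet (⋃ k : ℤ, ⋃ _ : k ≤ -1,
      {ω | (∫ s in Set.Icc (0 : ℝ) (t k),
        |α s ω - tsirelsonDrift t s (fun u => X u ω)|) = 0}) :=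
    MeasurableSet.iUnion fun k => MeasurableSet.iUnion fun hk => hEm k hk
  have hUae : ∀ᵐ ω ∂P, ω ∈ ⋃ k : ℤ, ⋃ _ : k ≤ -1,
      {ω | (∫ s in Set.Icc (0 : ℝ) (t k),
        |α s ω - tsirelsonDrift t s (fun u => X u ω)|) = 0} := by
    rw [ae_iff]
    have : {ω | ¬ ω ∈ ⋃ k : ℤ, ⋃ _ : k ≤ -1,
        {ω | (∫ s in Set.Icc (0 : ℝ) (t k),
          |α s ω - tsirelsonDrift t s (fun u => X u ω)|) = 0}}
        = (⋃ k : ℤ, ⋃ _ : k ≤ -1,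
        {ω | (∫ s in Set.Icc (0 : ℝ) (t k),
          |α s ω - tsirelsonDrift t s (fun u => X u ω)|) = 0})ᶜ := rfl
    rw [this, measure_compl hUm (measure_ne_top _ _), hEinf, measure_univ]
    simp
  have hGood : ∀ᵐ ω ∂P,
      (∀ s ∈ Set.Icc (0:ℝ) T, X s ω = (∫ r in Set.Icc (0:ℝ) s, α r ω) + B s ω)
      ∧ ∃ k₀ : ℤ, k₀ ≤ -1 ∧ (∫ s in Set.Icc (0 : ℝ) (t k₀),
          |α s ω - tsirelsonDrift t s (fun u => X u ω)|) = 0 := by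
    filter_upwards [hsde, hUae] with ω h1 h2
    refine ⟨h1, ?_⟩
    simp only [Set.mem_iUnion, Set.mem_setOf_eq] at h2
    obtain ⟨k, hk, hz⟩ := h2
    exact ⟨k, hk, hz⟩
  refine ⟨Tsir.alphaHat t α B, Tsir.xHat t α B, hprogα, hprogX, ?_⟩
  -- globally measurable comparison functions
  have hV : Measurable (Tsir.glob T (Tsir.alphaHat t α B)) :=
    Tsir.glob_meas (inferInstance : MeasurableSpace Ω) hT.le (hαHat₂ T hT.le)
  have hXht : ∀ j : ℤ, j ≤ 0 → Measurable (Tsir.xHat t α B (t j)) := by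
    intro j hj
    have h1 : Measurable fun ω => ∫ r in Set.Icc (0:ℝ) (t j), Tsir.alphaHat t α B r ω :=
      Tsir.meas_integral (inferInstance : MeasurableSpace Ω)
        (hαHat₂ (t j) (Tsir.nonneg ht hj))
    exact h1.add (hB₂ad (t j) (Tsir.nonneg ht hj))
  have hW : Measurable fun q : ℝ × Ω =>
      tsirelsonDrift t q.1 (fun u => Tsir.xHat t α B u q.2) :=
    Tsir.drift_meas_pw ht (inferInstance : MeasurableSpace Ω) (Tsir.xHat t α B)
      id measurable_id hXht
  set N : Set (ℝ × Ω) := {q : ℝ × Ω | q.1 ∈ Set.Icc (0:ℝ) T}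
      ∩ {q : ℝ × Ω | ¬ Tsir.glob T (Tsir.alphaHat t α B) q
          = tsirelsonDrift t q.1 (fun u => Tsir.xHat t α B u q.2)} with hN
  have hNm : MeasurableSet N :=
    ((measurable_fst measurableSet_Icc)).inter (measurableSet_eq_fun hV hW).compl
  -- the slices of N are Lebesgue-null for a.e. ω
  have hsliceset : ∀ᵐ ω ∂P,
      (volume.restrict (Set.Icc (0:ℝ) T)) ((fun s => (s, ω)) ⁻¹' N) = 0 := by
    filter_upwards [hGood] with ω hω
    obtain ⟨hsdeω, k₀, hk₀, hz⟩ := hω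
    have hg : Tsir.GoodAt T t α B X ω k₀ :=
      { hk₀ := hk₀
        hsde := hsdeω
        hint := fun S hSm hS =>
          Tsir.sect_integrableOn (inferInstance : MeasurableSpace Ω)
            (hα₂ T hT.le) hα_mem ω hS hSm
        hintA := fun S hSm hS =>
          Tsir.sect_integrableOn (inferInstance : MeasurableSpace Ω)
            (hA₂ k₀ T hT.le) (fun s ω' => Tsir.driftApprox_mem hα_mem k₀ s ω') ω hS hSm
        hD := Tsir.hD_of_int_eq_zero ht hα_mem
          (Tsir.sect_aemeas (inferInstance : MeasurableSpace Ω)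
            (hα₂ (t k₀) (Tsir.nonneg ht (by omega))) ω) hz }
    have hfin := Tsir.final_ae ht hT hα_mem hg
    refine measure_mono_null (fun s hsmem => ?_) (ae_iff.1 hfin)
    simp only [Set.mem_preimage, hN, Set.mem_inter_iff, Set.mem_setOf_eq] at hsmem
    simp only [Set.mem_setOf_eq]
    intro hcon
    exact hsmem.2 (by rw [Tsir.glob_spec hsmem.1]; exact hcon)
  have hNnull : ((volume.restrict (Set.Icc (0:ℝ) T)).prod P) N = 0 := by
    rw [Measure.prod_apply_symm hNm]
    have h0 : ∫⁻ ω, (volume.restrict (Set.Icc (0:ℝ) T)) ((fun s => (s, ω)) ⁻¹' N) ∂P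
        = ∫⁻ _, 0 ∂P := lintegral_congr_ae hsliceset
    rw [h0, lintegral_zero]
  have hrest : ((volume.restrict (Set.Icc (0:ℝ) T)).prod P)
      (((Set.Icc (0:ℝ) T)ᶜ) ×ˢ (Set.univ : Set Ω)) = 0 := by
    rw [Measure.prod_prod, Measure.restrict_apply measurableSet_Icc.compl]
    simp
  rw [ae_iff]
  refine measure_mono_null (fun p hp => ?_) (measure_union_null hNnull hrest)
  simp only [Set.mem_setOf_eq] at hp
  by_cases hpT : p.1 ∈ Set.Icc (0:ℝ) T
  · refine Or.inl ⟨hpT, fun hcon => hp ⟨?_, rfl⟩⟩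
    rw [← Tsir.glob_spec (u := Tsir.alphaHat t α B) (ω := p.2) hpT]
    exact hcon
  · exact Or.inr ⟨hpT, Set.mem_univ _⟩

end
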